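/- Let x be a binary string and let y be obtained from x by deleting a single symbol. If the string 0000 is not preserved from x to y, then the string 1111 is preserved from x to y. -/
import Mathlib


/-- Delete from `x` the symbols at the positions in `S`. -/
def deleteIdxs (x : List Bool) (S : Finset ℕ) : List Bool :=
  ((List.range x.length).filter (fun i => decide (i ∉ S))).map (fun i => x.getD i false)

/-- `w` occurs in `x` at position `i`. -/
def occursAt (w x : List Bool) (i : ℕ) : Prop := w <+: x.drop i

/-- The number of (possibly overlapping) occurrences of `w` in `x`. -/
def Nw (w x : List Bool) : ℕ :=
  ((Finset.range x.length).filter (fun i => w <+: x.drop i)).card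

/-- The position in the shortened string of the junction produced by deleting position `k`. -/
def junction (S : Finset ℕ) (k : ℕ) : ℕ :=
  ((Finset.range k).filter (fun m => m ∉ S)).card

/-- `w` is preserved from `x` to `y`: some set `S` of deleted positions realizing `y`
destroys no occurrence of `w` in `x` and no occurrence of `w` in `y` spans a junction. -/
def Preserved (w x y : List Bool) : Prop :=
  ∃ S : Finset ℕ,
    (∀ k ∈ S, k < x.length) ∧
    S.card + y.length = x.length ∧
    deleteIdxs x S = y ∧
    (∀ i, occursAt w x i → ∀ k ∈ S, ¬ (i ≤ k ∧ k < i + w.length)) ∧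
    (∀ j, occursAt w y j → ∀ k ∈ S, ¬ (j < junction S k ∧ junction S k < j + w.length))

/-- `x` has a (maximal) run of length `ℓ` starting at position `i`. -/
def runAt (x : List Bool) (i ℓ : ℕ) : Prop :=
  0 < ℓ ∧ i + ℓ ≤ x.length ∧
  (∀ j, i ≤ j → j < i + ℓ → x.getD j false = x.getD i false) ∧
  (i = 0 ∨ x.getD (i - 1) false ≠ x.getD i false) ∧
  (i + ℓ = x.length ∨ x.getD (i + ℓ) false ≠ x.getD i false)

/-- position `k` of `x` lies in a run of length `ℓ`. -/
def inRun (x : List Bool) (k ℓ : ℕ) : Prop := ∃ i, runAt x i ℓ ∧ i ≤ k ∧ k < i + ℓ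

def w0000 : List Bool := [false, false, false, false]
def w1111 : List Bool := [true, true, true, true]
def w11011 : List Bool := [true, true, false, true, true]
def w110011 : List Bool := [true, true, false, false, true, true]

/-- The set of strings obtainable from `x` by deleting two symbols. -/
def D2 (x : List Bool) : Set (List Bool) :=
  { y | ∃ i j : ℕ, i < j ∧ j < x.length ∧ y = deleteIdxs x ({i, j} : Finset ℕ) }

/-- run-length representation of the runs of ones, in order. -/
def tau1 (x : List Bool) : List ℕ :=
  ((x.splitBy (· == ·)).filter (fun r => r.headD false)).map List.length

/-- the subsequence of `tau1` of entries at least 2. -/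
def tauGe2 (x : List Bool) : List ℕ := (tau1 x).filter (fun ℓ => decide (2 ≤ ℓ))

/-- sum of the odd-indexed entries. -/
def oddIdxSum (l : List ℕ) : ℕ :=
  ((Finset.range l.length).filter (fun i => i % 2 = 1)).sum (fun i => l.getD i 0)


section Helpers

lemma deleteIdxs_singleton (x : List Bool) (k : ℕ) (hk : k < x.length) :
    deleteIdxs x ({k} : Finset ℕ) = x.take k ++ x.drop (k+1) := by
  unfold deleteIdxs
  have h1 : (fun i => decide (i ∉ ({k} : Finset ℕ))) = (fun i => decide (i ≠ k)) := by
    funext i; simp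
  rw [h1]
  have h2 : x.length = (k+1) + (x.length - (k+1)) := by omega
  rw [h2, List.range_add, List.filter_append, List.range_succ, List.filter_append,
    List.filter_map]
  have h3 : (List.range k).filter (fun i => decide (i ≠ k)) = List.range k := by
    apply List.filter_eq_self.2
    intro a ha
    simp at ha ⊢; omega
  have h4 : List.filter (fun i => decide (i ≠ k)) [k] = [] := by simp
  have h5 : (List.range (x.length - (k+1))).filter
      ((fun i => decide (i ≠ k)) ∘ (fun i => (k+1) + i)) = List.range (x.length - (k+1)) := by
    apply List.filter_eq_self.2
    intro a ha; simp; omega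
  rw [h3, h4, h5]
  rw [List.map_append, List.map_append, List.map_map]
  congr 1
  · apply List.ext_getElem
    · simp; omega
    · intro i hi1 hi2
      simp at hi1 ⊢
      rw [List.getElem?_eq_getElem (by omega)]
      simp
  · apply List.ext_getElem
    · simp
    · intro i hi1 hi2
      simp at hi1 ⊢
      rw [List.getElem?_eq_getElem (by omega)]
      simp

lemma len_td (x : List Bool) (k : ℕ) (hk : k < x.length) :
    (x.take k ++ x.drop (k+1)).length = x.length - 1 := by simp; omega

lemma getD_td_lt (x : List Bool) (k j : ℕ) (hk : k < x.length) (hj : j < k) :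
    (x.take k ++ x.drop (k+1)).getD j false = x.getD j false := by
  rw [List.getD_eq_getElem?_getD, List.getD_eq_getElem?_getD, List.getElem?_append,
    if_pos (by simp; omega), List.getElem?_take]
  simp [hj]

lemma getD_td_ge (x : List Bool) (k j : ℕ) (hk : k < x.length) (hj : k ≤ j) :
    (x.take k ++ x.drop (k+1)).getD j false = x.getD (j+1) false := by
  rw [List.getD_eq_getElem?_getD, List.getD_eq_getElem?_getD, List.getElem?_append,
    if_neg (by simp; omega), List.getElem?_drop]
  congr 2
  simp
  omega

lemma junction_singleton (k : ℕ) : junction ({k} : Finset ℕ) k = k := by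
  unfold junction
  rw [Finset.filter_true_of_mem, Finset.card_range]
  intro m hm
  simp at hm ⊢
  omega

lemma occursAt_replicate {b : Bool} {z : List Bool} {j : ℕ}
    (h : occursAt (List.replicate 4 b) z j) :
    j + 4 ≤ z.length ∧ ∀ t, j ≤ t → t < j + 4 → z.getD t false = b := by
  obtain ⟨r, hr⟩ := h
  have hlen : 4 + r.length = z.length - j := by
    have := congrArg List.length hr; simp at this; omega
  have hjz : j ≤ z.length := by
    by_contra hc
    have : z.drop j = [] := List.drop_eq_nil_of_le (by omega)
    rw [this] at hr
    have := congrArg List.length hr; simp at this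
  constructor
  · omega
  · intro t h1 h2
    have e1 : z.getD t false = (z.drop j).getD (t - j) false := by
      rw [List.getD_eq_getElem?_getD, List.getD_eq_getElem?_getD, List.getElem?_drop]
      congr 2
      omega
    rw [e1, ← hr, List.getD_eq_getElem?_getD, List.getElem?_append,
      if_pos (by simp; omega), List.getElem?_replicate, if_pos (by omega)]
    rfl

lemma preserved_single (x y : List Bool) (k' : ℕ) (b : Bool)
    (hk' : k' < x.length) (hdel : deleteIdxs x ({k'} : Finset ℕ) = y)
    (hx : ∀ i, occursAt (List.replicate 4 b) x i → ¬(i ≤ k' ∧ k' < i + 4))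
    (hyy : ∀ j, occursAt (List.replicate 4 b) y j → ¬(j < k' ∧ k' < j + 4)) :
    Preserved (List.replicate 4 b) x y := by
  refine ⟨{k'}, ?_, ?_, hdel, ?_, ?_⟩
  · intro m hm; simp at hm; omega
  · have : y.length = x.length - 1 := by
      rw [← hdel, deleteIdxs_singleton x k' hk', len_td x k' hk']
    simp [this]; omega
  · intro i hi m hm
    simp only [Finset.mem_singleton] at hm
    subst hm
    simpa using hx i hi
  · intro j hj m hm
    simp only [Finset.mem_singleton] at hm
    subst hm
    rw [junction_singleton]
    simpa using hyy j hj

lemma caseA (x y : List Bool) (k : ℕ) (hk : k < x.length)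
    (hy : y = deleteIdxs x ({k} : Finset ℕ))
    (hn : x.getD (k+1) false = x.getD k false) :
    Preserved (List.replicate 4 (! x.getD k false)) x y := by
  set s := x.getD k false with hs
  have hytd : y = x.take k ++ x.drop (k+1) := by rw [hy, deleteIdxs_singleton x k hk]
  apply preserved_single x y k _ hk hy.symm
  · rintro i hi ⟨h1, h2⟩
    have := (occursAt_replicate hi).2 k h1 (by omega)
    rw [← hs] at this
    simp at this
  · rintro j hj ⟨h1, h2⟩
    have h3 := (occursAt_replicate hj).2 k (by omega) (by omega)
    rw [hytd, getD_td_ge x k k hk le_rfl, hn] at h3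
    simp at h3

lemma caseB (x y : List Bool) (k : ℕ) (hk : k < x.length)
    (hy : y = deleteIdxs x ({k} : Finset ℕ))
    (hk0 : 0 < k) (hn : x.getD (k-1) false = x.getD k false) :
    Preserved (List.replicate 4 (! x.getD k false)) x y := by
  set s := x.getD k false with hs
  have hk1 : k - 1 < x.length := by omega
  have hytd : y = x.take k ++ x.drop (k+1) := by rw [hy, deleteIdxs_singleton x k hk]
  have hdel : deleteIdxs x ({k-1} : Finset ℕ) = y := by
    rw [deleteIdxs_singleton x (k-1) hk1, hytd]
    apply List.ext_getElem
    · rw [len_td x (k-1) hk1, len_td x k hk]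
    · intro i hi1 hi2
      rw [← List.getD_eq_getElem _ false hi1, ← List.getD_eq_getElem _ false hi2]
      rcases lt_trichotomy i (k-1) with hc | hc | hc
      · rw [getD_td_lt x (k-1) i hk1 hc, getD_td_lt x k i hk (by omega)]
      · rw [hc, getD_td_ge x (k-1) (k-1) hk1 le_rfl, getD_td_lt x k (k-1) hk (by omega)]
        have e : k - 1 + 1 = k := by omega
        rw [e]
        exact (hn.trans hs).symm
      · rw [getD_td_ge x (k-1) i hk1 (by omega), getD_td_ge x k i hk (by omega)]
  apply preserved_single x y (k-1) _ hk1 hdel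
  · rintro i hi ⟨h1, h2⟩
    have := (occursAt_replicate hi).2 (k-1) h1 (by omega)
    rw [hn] at this
    simp at this
  · rintro j hj ⟨h1, h2⟩
    have h3 := (occursAt_replicate hj).2 (k-1) (by omega) (by omega)
    rw [hytd, getD_td_lt x k (k-1) hk (by omega), hn] at h3
    simp at h3

lemma caseC (x y : List Bool) (k : ℕ) (hk : k < x.length)
    (hy : y = deleteIdxs x ({k} : Finset ℕ))
    (hr : x.getD (k+1) false ≠ x.getD k false)
    (hl : k = 0 ∨ x.getD (k-1) false ≠ x.getD k false) :
    Preserved (List.replicate 4 (x.getD k false)) x y := by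
  set s := x.getD k false with hs
  have hytd : y = x.take k ++ x.drop (k+1) := by rw [hy, deleteIdxs_singleton x k hk]
  apply preserved_single x y k _ hk hy.symm
  · rintro i hi ⟨h1, h2⟩
    obtain ⟨hlen, hval⟩ := occursAt_replicate hi
    rcases Nat.lt_or_ge i k with hc | hc
    · have hk0 : 0 < k := by omega
      have := hval (k-1) (by omega) (by omega)
      rcases hl with h | h
      · omega
      · exact h this
    · have hik : i = k := by omega
      exact hr (hval (k+1) (by omega) (by omega))
  · rintro j hj ⟨h1, h2⟩
    have hk0 : 0 < k := by omega
    have h3 := (occursAt_replicate hj).2 (k-1) (by omega) (by omega)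
    rw [hytd, getD_td_lt x k (k-1) hk (by omega)] at h3
    rcases hl with hZ | hZ
    · omega
    · exact hZ h3

end Helpers

/-- After a single deletion, if `0000` is not preserved then `1111` is preserved. -/
theorem single_deletion_0000_or_1111 (x y : List Bool) (k : ℕ) (hk : k < x.length)
    (hy : y = deleteIdxs x ({k} : Finset ℕ))
    (h : ¬ Preserved w0000 x y) :
    Preserved w1111 x y := by
  have h00 : w0000 = List.replicate 4 false := by rfl
  have h11 : w1111 = List.replicate 4 true := by rfl
  by_cases hA : x.getD (k+1) false = x.getD k false
  · have hp := caseA x y k hk hy hA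
    cases hb : x.getD k false
    · rw [hb] at hp
      rw [h11]
      simpa using hp
    · exfalso
      apply h
      rw [hb] at hp
      rw [h00]
      simpa using hp
  · by_cases hB : 0 < k ∧ x.getD (k-1) false = x.getD k false
    · have hp := caseB x y k hk hy hB.1 hB.2
      cases hb : x.getD k false
      · rw [hb] at hp
        rw [h11]
        simpa using hp
      · exfalso
        apply h
        rw [hb] at hp
        rw [h00]
        simpa using hp
    · have hl : k = 0 ∨ x.getD (k-1) false ≠ x.getD k false := by
        by_cases h0 : k = 0
        · exact Or.inl h0
        · right
          intro he
          exact hB ⟨Nat.pos_of_ne_zero h0, he⟩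
      have hp := caseC x y k hk hy hA hl
      cases hb : x.getD k false
      · exfalso
        apply h
        rw [hb] at hp
        rw [h00]
        exact hp
      · rw [hb] at hp
        rw [h11]
        exact hp
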